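/- The map Ψ is a bijection from the set 𝒯(∞) of marginally large tableaux of type D_n onto the set of Kostant partitions of type D_n (functions from the n(n−1) positive roots of type D_n to ℤ_{≥0}). -/

import Mathlib

open scoped Classical

noncomputable section

/-- Standard basis vector `e i` (1-based coordinates, ambient `ℤ^n` sits inside `ℕ → ℤ`). -/
def stdE (i : ℕ) : ℕ → ℤ := fun j => if j = i then 1 else 0

/-- Type `D_n` simple roots: `α_i = e_i - e_(i+1)` for `1 ≤ i ≤ n-1`, `α_n = e_(n-1) + e_n`. -/
def alphaD (n i : ℕ) : ℕ → ℤ := if i = n then stdE (n-1) + stdE n else stdE i - stdE (i+1)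

/-- Positive root `β_(i,k) = α_i + ⋯ + α_k = e_i - e_(k+1)` (for `1 ≤ i ≤ k ≤ n-1`). -/
def betaD (i k : ℕ) : ℕ → ℤ := stdE i - stdE (k+1)

/-- Positive root `γ_(i,k) = α_i + ⋯ + α_(n-2) + α_n + α_(n-1) + ⋯ + α_k = e_i + e_k`
(for `1 ≤ i < k ≤ n`). -/
def gammaD (i k : ℕ) : ℕ → ℤ := stdE i + stdE k

/-- `β` is a positive root of type `D_n`. -/
def PosRootD (n : ℕ) (β : ℕ → ℤ) : Prop :=
  (∃ i k, 1 ≤ i ∧ i ≤ k ∧ k ≤ n-1 ∧ β = betaD i k) ∨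
  (∃ i k, 1 ≤ i ∧ i < k ∧ k ≤ n ∧ β = gammaD i k)

/-- The simple reflection `s_i` of `W(D_n)` acting on `ℤ^n`: for `i ≤ n-1` it swaps
coordinates `i` and `i+1`; `s_n` swaps coordinates `n-1` and `n` and negates both. -/
def sDap (n i : ℕ) (v : ℕ → ℤ) : ℕ → ℤ :=
  if i = n then fun j => if j = n-1 then -(v n) else if j = n then -(v (n-1)) else v j
  else fun j => if j = i then v (i+1) else if j = i+1 then v i else v j

/-- The action of the product `s_(i₁) ⋯ s_(i_N)` on a vector. -/
def actD (n : ℕ) (w : List ℕ) (v : ℕ → ℤ) : ℕ → ℤ := w.foldr (sDap n) v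

/-- The induced root sequence `β_k = s_(i₁)⋯s_(i_(k-1)) (α_(i_k))` of a word (0-indexed). -/
def rootSeqD (n : ℕ) (w : List ℕ) : List (ℕ → ℤ) :=
  (List.range w.length).map fun k => actD n (w.take k) (alphaD n (w.getD k 0))

/-- The block `(i, i+1, …, n-1, n, n-2, n-3, …, i)` of the word `𝐢^D`. -/
def blockD (n i : ℕ) : List ℕ :=
  ((List.range (n-i)).map (· + i)) ++ [n] ++ (((List.range (n-1-i)).map (· + i)).reverse)

/-- The word `𝐢^D`: the blocks `(i, i+1, …, n-1, n, n-2, …, i)` for `i = 1, …, n-2`,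
followed by `(n-1, n)`. -/
def wordD (n : ℕ) : List ℕ :=
  ((List.range (n-2)).flatMap fun i' => blockD n (i'+1)) ++ [n-1, n]

/-- Standard inner product on `ℤ^n` (coordinates `1,…,n`; index `0` unused). -/
def ipD (n : ℕ) (v u : ℕ → ℤ) : ℤ := ∑ j ∈ Finset.range (n+1), v j * u j

/-!  Marginally large tableaux of type `D_n`.  The alphabet `J(D_n)` is encoded in `ℕ`:
the unbarred letter `k` (for `1 ≤ k ≤ n`) is `k`, and the barred letter `k̄` is `2n+1-k`
(so `n̄ = n+1`, `(n-1)-bar = n+2`, …, `1̄ = 2n`). -/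

/-- The strict order on `J(D_n)`: numerically smaller, except that `n` and `n̄` are
incomparable. -/
def ltD (n x y : ℕ) : Prop := x < y ∧ ¬(x = n ∧ y = n+1)

/-- The (partial) order `≼` on `J(D_n)`. -/
def leD (n x y : ℕ) : Prop := x = y ∨ ltD n x y

/-- A tableau is recorded as its list of rows (top row first). -/
abbrev TabD := List (List ℕ)

/-- A marginally large tableau of type `D_n`: exactly `n-1` rows of weakly decreasing
lengths; entries in `J(D_n)` weakly increasing along rows, with no row containing both `n`
and `n̄`; strictly increasing down columns except that `n` and `n̄` may be consecutive in a
column in either order; all entries of row `i` are `≼ ī` and the leftmost entry of row `i`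
is `i`; and the number of entries equal to `i` in row `i` exceeds the number of boxes of
row `i+1` by exactly `1`. (Rows are 0-indexed: row index `r` is row `i = r+1`.) -/
def isMLTabD (n : ℕ) (T : TabD) : Prop :=
  T.length = n - 1 ∧
  (∀ r, r < n-1 → ∀ x ∈ T.getD r [], 1 ≤ x ∧ x ≤ 2*n) ∧
  (∀ r, r + 1 < n-1 → (T.getD (r+1) []).length ≤ (T.getD r []).length) ∧
  (∀ r, r < n-1 → (T.getD r []).Chain' (leD n)) ∧
  (∀ r, r < n-1 → ¬(n ∈ T.getD r [] ∧ (n+1) ∈ T.getD r [])) ∧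
  (∀ r, r + 1 < n-1 → ∀ cidx, cidx < (T.getD (r+1) []).length →
    (ltD n ((T.getD r []).getD cidx 0) ((T.getD (r+1) []).getD cidx 0) ∨
     ((T.getD r []).getD cidx 0 = n ∧ (T.getD (r+1) []).getD cidx 0 = n+1) ∨
     ((T.getD r []).getD cidx 0 = n+1 ∧ (T.getD (r+1) []).getD cidx 0 = n))) ∧
  (∀ r, r < n-1 → ∀ x ∈ T.getD r [], leD n x (2*n - r)) ∧
  (∀ r, r < n-1 → (T.getD r []).head? = some (r+1)) ∧
  (∀ r, r < n-1 → (T.getD r []).count (r+1) = (T.getD (r+1) []).length + 1)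

/-- The target of the `i`-arrow of the fundamental crystal of type `D_n` with source `x`
(if `x` is a source of an `i`-arrow). -/
def arrowD (n i x : ℕ) : Option ℕ :=
  if 1 ≤ i ∧ i ≤ n-2 then
    (if x = i then some (i+1) else if x = 2*n - i then some (2*n + 1 - i) else none)
  else if i = n-1 then
    (if x = n-1 then some n else if x = n+1 then some (n+2) else none)
  else if i = n then
    (if x = n-1 then some (n+1) else if x = n then some (n+2) else none)
  else none

/-- The source of the `i`-arrow of the fundamental crystal of type `D_n` with target `x`
(if `x` is a target of an `i`-arrow). -/
def coArrowD (n i x : ℕ) : Option ℕ :=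
  if 1 ≤ i ∧ i ≤ n-2 then
    (if x = i+1 then some i else if x = 2*n + 1 - i then some (2*n - i) else none)
  else if i = n-1 then
    (if x = n then some (n-1) else if x = n+2 then some (n+1) else none)
  else if i = n then
    (if x = n+1 then some (n-1) else if x = n+2 then some n else none)
  else none

/-- The middle-Eastern reading: rows top to bottom, each row right to left (box positions
`(row index, column index)`). -/
def posME (T : TabD) : List (ℕ × ℕ) :=
  (T.mapIdx fun r row => ((List.range row.length).reverse).map fun cidx => (r, cidx)).flatten

/-- The far-Eastern reading: columns right to left, each column top to bottom. -/
def posFE (T : TabD) : List (ℕ × ℕ) :=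
  ((List.range (T.getD 0 []).length).reverse).flatMap fun cidx =>
    (List.range T.length).filterMap fun r =>
      if cidx < (T.getD r []).length then some (r, cidx) else none

/-- The entry of the box of `T` at position `p = (row, column)`. -/
def entryAt (T : TabD) (p : ℕ × ℕ) : ℕ := (T.getD p.1 []).getD p.2 0

/-- One step of bracket cancellation, on labeled brackets (`true` = '(' , `false` = ')').
The state is `(labels of uncanceled ')', stack of currently open '(')`. -/
def brStep {α : Type*} (st : List α × List α) (x : Bool × α) : List α × List α :=
  match x with
  | (true, lab) => (st.1, lab :: st.2)
  | (false, lab) =>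
    match st.2 with
    | [] => (lab :: st.1, [])
    | _ :: rest => (st.1, rest)

/-- Sequentially cancel adjacent `()` pairs in a labeled bracket string. -/
def brReduce {α : Type*} (l : List (Bool × α)) : List α × List α := l.foldl brStep ([], [])

/-- The label of the leftmost uncanceled '(' in a labeled bracket string, if any. -/
def brLeftOpen {α : Type*} (l : List (Bool × α)) : Option α := (brReduce l).2.getLast?

/-- The label of the rightmost uncanceled ')' in a labeled bracket string, if any. -/
def brRightClose {α : Type*} (l : List (Bool × α)) : Option α := (brReduce l).1.head?

/-- The `i`-bracket string of a tableau for a given reading: ')' for each box whose entry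
is the target of an `i`-arrow, '(' for each box whose entry is its source, labeled by box
positions, in reading order. -/
def brTabD (n i : ℕ) (T : TabD) (reading : List (ℕ × ℕ)) : List (Bool × (ℕ × ℕ)) :=
  reading.filterMap fun p =>
    if (coArrowD n i (entryAt T p)).isSome then some (false, p)
    else if (arrowD n i (entryAt T p)).isSome then some (true, p)
    else none

/-- Replace the entry of the box in row `r`, column `cidx` by `x`. -/
def setEntryD (T : TabD) (r cidx x : ℕ) : TabD := T.set r ((T.getD r []).set cidx x)

/-- Insert one column with entries `1, 2, …, l`: each row `r+1 ≤ l` receives one extra box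
with entry `r+1`. -/
def insColD (l : ℕ) (T : TabD) : TabD :=
  T.mapIdx fun r row => if r + 1 ≤ l then List.orderedInsert (· ≤ ·) (r+1) row else row

/-- Delete one column with entries `1, 2, …, l`: each row `r+1 ≤ l` loses one box with
entry `r+1`. -/
def delColD (l : ℕ) (T : TabD) : TabD :=
  T.mapIdx fun r row => if r + 1 ≤ l then row.erase (r+1) else row

/-- If `T` is not marginally large, insert exactly one column `1, …, l` (for the appropriate
`l`) so that the result is marginally large. -/
def normInsD (n : ℕ) (T : TabD) : TabD :=
  if isMLTabD n T then T
  else if h : ∃ l, isMLTabD n (insColD l T) then insColD (Nat.find h) T else T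

/-- If `T` is not marginally large, delete exactly one column `1, …, l` (for the appropriate
`l`) so that the result is marginally large. -/
def normDelD (n : ℕ) (T : TabD) : TabD :=
  if isMLTabD n T then T
  else if h : ∃ l, isMLTabD n (delColD l T) then delColD (Nat.find h) T else T

/-- The tableau crystal operator `f_i` with respect to a reading: replace the entry of the
box contributing the leftmost uncanceled '(' by the target of its `i`-arrow, then if the
result is not marginally large insert one column so that it is. -/
def fTabD (n i : ℕ) (reading : TabD → List (ℕ × ℕ)) (T : TabD) : TabD :=
  match brLeftOpen (brTabD n i T (reading T)) with
  | none => T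
  | some p =>
      match arrowD n i (entryAt T p) with
      | none => T
      | some y => normInsD n (setEntryD T p.1 p.2 y)

/-- The tableau crystal operator `e_i` with respect to a reading: replace the entry of the
box contributing the rightmost uncanceled ')' by the source of its `i`-arrow, then if the
result is not marginally large delete one column so that it is; if there is no uncanceled
')', the result is `0` (here: `none`). -/
def eTabD (n i : ℕ) (reading : TabD → List (ℕ × ℕ)) (T : TabD) : Option TabD :=
  match brRightClose (brTabD n i T (reading T)) with
  | none => none
  | some p =>
      match coArrowD n i (entryAt T p) with
      | none => none
      | some y => some (normDelD n (setEntryD T p.1 p.2 y))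

/-- The contribution of row `j` (1-based, with entries `R`) of a marginally large tableau to
the coefficient of the positive root `β` under the map `Ψ`: each `j̄` contributes to
`c_(β_(j,j))` and `c_(γ_(j,j+1))`; each pair `(k, k̄)` (for `j < k ≤ n-1`, `min(a_k, b_k)`
pairs) contributes to `c_(β_(j,k))` and `c_(γ_(j,k+1))`; each remaining unbarred `k`
(`j < k ≤ n`) contributes to `c_(β_(j,k-1))`; each remaining barred `k̄` (`j < k ≤ n`)
contributes to `c_(γ_(j,k))`. -/
def rowContribD (n j : ℕ) (R : List ℕ) (β : ℕ → ℤ) : ℕ :=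
  (if β = betaD j j then R.count (2*n+1-j) else 0) +
  (if β = gammaD j (j+1) then R.count (2*n+1-j) else 0) +
  (∑ k ∈ Finset.Ioc j (n-1),
    ((if β = betaD j k then min (R.count k) (R.count (2*n+1-k)) else 0) +
     (if β = gammaD j (k+1) then min (R.count k) (R.count (2*n+1-k)) else 0) +
     (if β = betaD j (k-1) then R.count k - min (R.count k) (R.count (2*n+1-k)) else 0) +
     (if β = gammaD j k then R.count (2*n+1-k) - min (R.count k) (R.count (2*n+1-k)) else 0))) +
  (if β = betaD j (n-1) then R.count n else 0) +
  (if β = gammaD j n then R.count (n+1) else 0)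

/-- The map `Ψ` from marginally large tableaux of type `D_n` to Kostant partitions
(as functions from vectors to `ℕ`, supported on the positive roots). -/
def PsiD (n : ℕ) (T : TabD) : (ℕ → ℤ) → ℕ := fun β =>
  ∑ j ∈ Finset.Icc 1 (n-1), rowContribD n j (T.getD (j-1) []) β

/-- A Kostant partition of type `D_n`: a function from vectors to `ℕ` supported on the
positive roots of type `D_n`. -/
def isKPD (n : ℕ) (c : (ℕ → ℤ) → ℕ) : Prop := ∀ β, ¬ PosRootD n β → c β = 0

section AuxRoots

lemma betaD_apply (i k x : ℕ) : betaD i k x = (if x = i then (1:ℤ) else 0) - (if x = k+1 then 1 else 0) := rfl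

lemma gammaD_apply (i k x : ℕ) : gammaD i k x = (if x = i then (1:ℤ) else 0) + (if x = k then 1 else 0) := rfl

lemma betaD_eq_betaD_iff {i k i' k' : ℕ} (hi : 1 ≤ i) (hik : i ≤ k) (hi' : 1 ≤ i') (hik' : i' ≤ k') :
    betaD i k = betaD i' k' ↔ i = i' ∧ k = k' := by
  constructor
  · intro h
    have h2 := congrFun h (k+1)
    rw [betaD_apply, betaD_apply, if_neg (show ¬ k+1 = i by omega), if_pos rfl] at h2
    have hkk' : k = k' := by split_ifs at h2 <;> omega
    subst hkk'
    have h1 := congrFun h i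
    rw [betaD_apply, betaD_apply, if_pos rfl, if_neg (show ¬ i = k+1 by omega)] at h1
    have : i = i' := by split_ifs at h1 <;> omega
    exact ⟨this, rfl⟩
  · rintro ⟨rfl, rfl⟩; rfl

lemma betaD_ne_gammaD {i k i' k' : ℕ} (hi : 1 ≤ i) (hik : i ≤ k) (hik' : i' < k') :
    betaD i k ≠ gammaD i' k' := by
  intro h
  have h2 := congrFun h (k+1)
  rw [betaD_apply, gammaD_apply, if_neg (show ¬ k+1 = i by omega), if_pos rfl] at h2
  split_ifs at h2 <;> omega

lemma gammaD_eq_gammaD_iff {i k i' k' : ℕ} (hik : i < k) (hik' : i' < k') :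
    gammaD i k = gammaD i' k' ↔ i = i' ∧ k = k' := by
  constructor
  · intro h
    by_cases hii' : i = i'
    · subst hii'
      have h2 := congrFun h k
      rw [gammaD_apply, gammaD_apply, if_neg (show ¬ k = i by omega), if_pos rfl] at h2
      refine ⟨rfl, ?_⟩
      split_ifs at h2 <;> omega
    · exfalso
      have h1 := congrFun h i
      rw [gammaD_apply, gammaD_apply, if_pos rfl, if_neg (show ¬ i = k by omega),
        if_neg hii'] at h1
      have h3 := congrFun h i'
      rw [gammaD_apply, gammaD_apply, if_neg (show ¬ i' = i from fun e => hii' e.symm),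
        if_pos rfl, if_neg (show ¬ i' = k' by omega)] at h3
      split_ifs at h1 h3 <;> omega
  · rintro ⟨rfl, rfl⟩; rfl

end AuxRoots
section AuxContrib

lemma rowContrib_eq_zero {n j : ℕ} {β : ℕ → ℤ} (hn : 4 ≤ n) (hj : 1 ≤ j) (hjn : j ≤ n-1)
    (R : List ℕ)
    (hb : ∀ k, j ≤ k → k ≤ n-1 → β ≠ betaD j k) (hg : ∀ k, j < k → k ≤ n → β ≠ gammaD j k) :
    rowContribD n j R β = 0 := by
  rw [rowContribD]
  rw [if_neg (hb j le_rfl hjn), if_neg (hg (j+1) (by omega) (by omega)),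
      if_neg (hb (n-1) hjn le_rfl), if_neg (hg n (by omega) le_rfl)]
  have hs : (∑ k ∈ Finset.Ioc j (n-1),
      ((if β = betaD j k then min (R.count k) (R.count (2*n+1-k)) else 0) +
       (if β = gammaD j (k+1) then min (R.count k) (R.count (2*n+1-k)) else 0) +
       (if β = betaD j (k-1) then R.count k - min (R.count k) (R.count (2*n+1-k)) else 0) +
       (if β = gammaD j k then R.count (2*n+1-k) - min (R.count k) (R.count (2*n+1-k)) else 0))) = 0 := by
    apply Finset.sum_eq_zero
    intro k hk
    simp only [Finset.mem_Ioc] at hk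
    rw [if_neg (hb k (by omega) hk.2), if_neg (hg (k+1) (by omega) (by omega)),
        if_neg (hb (k-1) (by omega) (by omega)), if_neg (hg k hk.1 (by omega))]
    omega
  rw [hs]

lemma rowContrib_not_root {n j : ℕ} {β : ℕ → ℤ} (hn : 4 ≤ n) (hj : 1 ≤ j) (hjn : j ≤ n-1)
    (R : List ℕ) (hβ : ¬ PosRootD n β) : rowContribD n j R β = 0 :=
  rowContrib_eq_zero hn hj hjn R
    (fun k h1 h2 heq => hβ (Or.inl ⟨j, k, hj, h1, h2, heq⟩))
    (fun k h1 h2 heq => hβ (Or.inr ⟨j, k, hj, h1, h2, heq⟩))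

lemma rowContrib_other_beta {n j i k : ℕ} (hn : 4 ≤ n) (hj : 1 ≤ j) (hjn : j ≤ n-1)
    (hi : 1 ≤ i) (hik : i ≤ k) (hk : k ≤ n-1) (hij : i ≠ j) (R : List ℕ) :
    rowContribD n j R (betaD i k) = 0 := by
  apply rowContrib_eq_zero hn hj hjn R
  · intro k' h1 h2 heq
    rw [betaD_eq_betaD_iff hi hik hj h1] at heq
    exact hij heq.1
  · intro k' h1 h2 heq
    exact betaD_ne_gammaD hi hik h1 heq

lemma rowContrib_other_gamma {n j i k : ℕ} (hn : 4 ≤ n) (hj : 1 ≤ j) (hjn : j ≤ n-1)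
    (hi : 1 ≤ i) (hik : i < k) (hk : k ≤ n) (hij : i ≠ j) (R : List ℕ) :
    rowContribD n j R (gammaD i k) = 0 := by
  apply rowContrib_eq_zero hn hj hjn R
  · intro k' h1 h2 heq
    exact betaD_ne_gammaD hj h1 hik heq.symm
  · intro k' h1 h2 heq
    rw [gammaD_eq_gammaD_iff hik h1] at heq
    exact hij heq.1

lemma rowContrib_beta_eval {n j k : ℕ} (hn : 4 ≤ n) (hj : 1 ≤ j) (hjk : j ≤ k) (hk : k ≤ n-1)
    (R : List ℕ) :
    rowContribD n j R (betaD j k) =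
      (if k = j then R.count (2*n+1-j) else min (R.count k) (R.count (2*n+1-k))) +
      (R.count (k+1) - (if k+1 ≤ n-1 then min (R.count (k+1)) (R.count (2*n+1-(k+1))) else 0)) := by
  rw [rowContribD]
  have e1 : (betaD j k = betaD j j) ↔ (k = j) := by
    rw [betaD_eq_betaD_iff hj hjk hj le_rfl]; simp
  have e2 : (betaD j k = gammaD j (j+1)) ↔ False :=
    iff_false_intro (betaD_ne_gammaD hj hjk (by omega))
  have e3 : (betaD j k = betaD j (n-1)) ↔ (k = n-1) := by
    rw [betaD_eq_betaD_iff hj hjk hj (by omega : j ≤ n-1)]; simp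
  have e4 : (betaD j k = gammaD j n) ↔ False :=
    iff_false_intro (betaD_ne_gammaD hj hjk (by omega))
  have hsum : ∀ k' ∈ Finset.Ioc j (n-1),
      ((if betaD j k = betaD j k' then min (R.count k') (R.count (2*n+1-k')) else 0) +
       (if betaD j k = gammaD j (k'+1) then min (R.count k') (R.count (2*n+1-k')) else 0) +
       (if betaD j k = betaD j (k'-1) then R.count k' - min (R.count k') (R.count (2*n+1-k')) else 0) +
       (if betaD j k = gammaD j k' then R.count (2*n+1-k') - min (R.count k') (R.count (2*n+1-k')) else 0))
      = (if k = k' then min (R.count k') (R.count (2*n+1-k')) else 0) +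
        (if k+1 = k' then R.count k' - min (R.count k') (R.count (2*n+1-k')) else 0) := by
    intro k' hk'
    simp only [Finset.mem_Ioc] at hk'
    have c1 : (betaD j k = betaD j k') ↔ (k = k') := by
      rw [betaD_eq_betaD_iff hj hjk hj (le_of_lt hk'.1)]; simp
    have c2 : (betaD j k = betaD j (k'-1)) ↔ (k+1 = k') := by
      rw [betaD_eq_betaD_iff hj hjk hj (by omega : j ≤ k'-1)]; omega
    rw [if_neg (betaD_ne_gammaD hj hjk (show j < k'+1 by omega)),
        if_neg (betaD_ne_gammaD hj hjk hk'.1)]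
    simp only [c1, c2, add_zero]
  rw [Finset.sum_congr rfl hsum, Finset.sum_add_distrib, Finset.sum_ite_eq, Finset.sum_ite_eq]
  simp only [e1, e2, e3, e4, if_false, Finset.mem_Ioc, add_zero, zero_add]
  by_cases h2 : k+1 ≤ n-1
  · split_ifs <;> omega
  · rw [show R.count n = R.count (k+1) from by rw [show n = k+1 by omega]]
    split_ifs <;> omega

lemma rowContrib_gamma_eval {n j k : ℕ} (hn : 4 ≤ n) (hj : 1 ≤ j) (hjk : j < k) (hk : k ≤ n)
    (R : List ℕ) :
    rowContribD n j R (gammaD j k) =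
      (if k = j+1 then R.count (2*n+1-j) else min (R.count (k-1)) (R.count (2*n+1-(k-1)))) +
      (R.count (2*n+1-k) - (if k ≤ n-1 then min (R.count k) (R.count (2*n+1-k)) else 0)) := by
  rw [rowContribD]
  have e1 : (gammaD j k = betaD j j) ↔ False :=
    iff_false_intro (fun h => betaD_ne_gammaD hj le_rfl hjk h.symm)
  have e2 : (gammaD j k = gammaD j (j+1)) ↔ (k = j+1) := by
    rw [gammaD_eq_gammaD_iff hjk (by omega)]; simp
  have e3 : (gammaD j k = betaD j (n-1)) ↔ False :=
    iff_false_intro (fun h => betaD_ne_gammaD hj (by omega) hjk h.symm)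
  have e4 : (gammaD j k = gammaD j n) ↔ (k = n) := by
    rw [gammaD_eq_gammaD_iff hjk (by omega)]; simp
  have hsum : ∀ k' ∈ Finset.Ioc j (n-1),
      ((if gammaD j k = betaD j k' then min (R.count k') (R.count (2*n+1-k')) else 0) +
       (if gammaD j k = gammaD j (k'+1) then min (R.count k') (R.count (2*n+1-k')) else 0) +
       (if gammaD j k = betaD j (k'-1) then R.count k' - min (R.count k') (R.count (2*n+1-k')) else 0) +
       (if gammaD j k = gammaD j k' then R.count (2*n+1-k') - min (R.count k') (R.count (2*n+1-k')) else 0))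
      = (if k-1 = k' then min (R.count k') (R.count (2*n+1-k')) else 0) +
        (if k = k' then R.count (2*n+1-k') - min (R.count k') (R.count (2*n+1-k')) else 0) := by
    intro k' hk'
    simp only [Finset.mem_Ioc] at hk'
    have c1 : (gammaD j k = gammaD j (k'+1)) ↔ (k-1 = k') := by
      rw [gammaD_eq_gammaD_iff hjk (by omega)]; omega
    have c2 : (gammaD j k = gammaD j k') ↔ (k = k') := by
      rw [gammaD_eq_gammaD_iff hjk hk'.1]; simp
    rw [if_neg (show ¬ (gammaD j k = betaD j k') from fun h => betaD_ne_gammaD hj (le_of_lt hk'.1) hjk h.symm),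
        if_neg (show ¬ (gammaD j k = betaD j (k'-1)) from fun h => betaD_ne_gammaD hj (by omega : j ≤ k'-1) hjk h.symm)]
    simp only [c1, c2, zero_add, add_zero]
  rw [Finset.sum_congr rfl hsum, Finset.sum_add_distrib, Finset.sum_ite_eq, Finset.sum_ite_eq]
  simp only [e1, e2, e3, e4, if_false, Finset.mem_Ioc, add_zero, zero_add]
  by_cases h2 : k ≤ n-1
  · split_ifs <;> omega
  · rw [show R.count (n+1) = R.count (2*n+1-k) from by rw [show n+1 = 2*n+1-k by omega]]
    split_ifs <;> omega

end AuxContrib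
section AuxDefs

/-- minimum of the two `c`-values in column `k` of row `j`'s inversion data -/
def MjF (j : ℕ) (c : (ℕ → ℤ) → ℕ) (k : ℕ) : ℕ := min (c (betaD j k)) (c (gammaD j (k+1)))

/-- `MjF` truncated at `n` -/
def MjF0 (n j : ℕ) (c : (ℕ → ℤ) → ℕ) (k : ℕ) : ℕ := if k ≤ n-1 then MjF j c k else 0

/-- letter counts of row `j` reconstructed from a Kostant partition `c` -/
def cntF (n j : ℕ) (c : (ℕ → ℤ) → ℕ) (aj : ℕ) : ℕ → ℕ := fun x =>
  if x = j then aj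
  else if x ≤ n then c (betaD j (x-1)) - MjF j c (x-1) + MjF0 n j c x
  else if x = 2*n+1-j then MjF j c j
  else c (gammaD j (2*n+1-x)) - MjF j c (2*n-x) + MjF0 n j c (2*n+1-x)

/-- the weakly increasing row with letter counts `cnt` on the alphabet `[j, 2n+1-j]` -/
def mkRow (n j : ℕ) (cnt : ℕ → ℕ) : List ℕ :=
  (List.range' j (2*n+2-2*j)).flatMap fun y => List.replicate (cnt y) y

/-- lengths of the reconstructed rows, from the bottom: `rowLenAux n c t` is the length of
row `n - t` -/
def rowLenAux (n : ℕ) (c : (ℕ → ℤ) → ℕ) : ℕ → ℕ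
  | 0 => 0
  | t+1 => (mkRow n (n-t-1) (cntF n (n-t-1) c (rowLenAux n c t + 1))).length

/-- the inverse map of `Ψ`, from Kostant partitions to marginally large tableaux -/
def PhiD (n : ℕ) (c : (ℕ → ℤ) → ℕ) : TabD :=
  (List.range (n-1)).map fun r => mkRow n (r+1) (cntF n (r+1) c (rowLenAux n c (n-r-2) + 1))

end AuxDefs
section AuxPsi

lemma PsiD_beta {n i k : ℕ} (hn : 4 ≤ n) (hi : 1 ≤ i) (hik : i ≤ k) (hk : k ≤ n-1) (T : TabD) :
    PsiD n T (betaD i k) = rowContribD n i (T.getD (i-1) []) (betaD i k) := by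
  rw [PsiD]
  apply Finset.sum_eq_single_of_mem i (by simp only [Finset.mem_Icc]; omega)
  intro j hj hji
  simp only [Finset.mem_Icc] at hj
  exact rowContrib_other_beta hn hj.1 hj.2 hi hik hk (fun h => hji (h ▸ rfl)) _

lemma PsiD_gamma {n i k : ℕ} (hn : 4 ≤ n) (hi : 1 ≤ i) (hik : i < k) (hk : k ≤ n) (T : TabD) :
    PsiD n T (gammaD i k) = rowContribD n i (T.getD (i-1) []) (gammaD i k) := by
  rw [PsiD]
  apply Finset.sum_eq_single_of_mem i (by simp only [Finset.mem_Icc]; omega)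
  intro j hj hji
  simp only [Finset.mem_Icc] at hj
  exact rowContrib_other_gamma hn hj.1 hj.2 hi hik hk (fun h => hji (h ▸ rfl)) _

lemma PsiD_isKPD (n : ℕ) (hn : 4 ≤ n) (T : TabD) : isKPD n (PsiD n T) := by
  intro β hβ
  rw [PsiD]
  apply Finset.sum_eq_zero
  intro j hj
  simp only [Finset.mem_Icc] at hj
  exact rowContrib_not_root hn hj.1 hj.2 _ hβ

end AuxPsi

section AuxList

/-- counts in a flatMap of replicates over a nodup list -/
lemma count_flatMap_replicate (cnt : ℕ → ℕ) (x : ℕ) (l : List ℕ) (hl : l.Nodup) :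
    (l.flatMap fun y => List.replicate (cnt y) y).count x = if x ∈ l then cnt x else 0 := by
  induction l with
  | nil => simp
  | cons y l ih =>
    simp only [List.flatMap_cons, List.count_append, List.nodup_cons] at *
    rw [ih hl.2, List.count_replicate]
    by_cases hxy : x = y
    · subst hxy
      simp [hl.1]
    · simp [hxy, Ne.symm hxy]

lemma sorted_flatMap_replicate (cnt : ℕ → ℕ) (l : List ℕ) (hl : l.Pairwise (· ≤ ·)) :
    (l.flatMap fun y => List.replicate (cnt y) y).Pairwise (· ≤ ·) := by
  induction l with
  | nil => simp
  | cons y l ih =>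
    simp only [List.flatMap_cons]
    rw [List.pairwise_append]
    refine ⟨?_, ih hl.of_cons, ?_⟩
    · rw [List.pairwise_replicate]; right; exact le_rfl
    · intro a ha b hb
      rw [List.eq_of_mem_replicate ha]
      rcases List.mem_flatMap.1 hb with ⟨z, hz, hbz⟩
      rw [List.eq_of_mem_replicate hbz]
      exact List.rel_of_pairwise_cons hl hz

lemma sorted_mkRow (n j : ℕ) (cnt : ℕ → ℕ) : (mkRow n j cnt).Pairwise (· ≤ ·) := by
  apply sorted_flatMap_replicate
  exact (List.pairwise_lt_range' (s := j)).imp (fun h => le_of_lt h)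

lemma count_mkRow (n j x : ℕ) (cnt : ℕ → ℕ) (hjn : j ≤ n) :
    (mkRow n j cnt).count x = if j ≤ x ∧ x ≤ 2*n+1-j then cnt x else 0 := by
  rw [mkRow, count_flatMap_replicate _ _ _ (List.nodup_range')]
  congr 1
  simp only [List.mem_range'_1, eq_iff_iff]
  omega

lemma mem_mkRow_bounds {n j x : ℕ} (cnt : ℕ → ℕ) (hjn : j ≤ n) (hx : x ∈ mkRow n j cnt) :
    j ≤ x ∧ x ≤ 2*n+1-j := by
  rw [mkRow] at hx
  rcases List.mem_flatMap.1 hx with ⟨y, hy, hxy⟩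
  rw [List.eq_of_mem_replicate hxy]
  rw [List.mem_range'_1] at hy
  omega

lemma mkRow_eq_cons (n j : ℕ) (cnt : ℕ → ℕ) (hjn : j ≤ n) :
    mkRow n j cnt = List.replicate (cnt j) j ++
      ((List.range' (j+1) (2*n+1-2*j)).flatMap fun y => List.replicate (cnt y) y) := by
  rw [mkRow, show 2*n+2-2*j = (2*n+1-2*j)+1 by omega, List.range'_succ, List.flatMap_cons]

lemma getD_mkRow_of_lt {n j i : ℕ} (cnt : ℕ → ℕ) (hjn : j ≤ n) (h : i < cnt j) :
    (mkRow n j cnt).getD i 0 = j := by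
  rw [mkRow_eq_cons n j cnt hjn,
    List.getD_append _ _ _ _ (by simpa using h)]
  rw [List.getD_eq_getElem _ _ (by simpa using h)]
  exact List.getElem_replicate ..

lemma head?_mkRow {n j : ℕ} (cnt : ℕ → ℕ) (hjn : j ≤ n) (h : 0 < cnt j) :
    (mkRow n j cnt).head? = some j := by
  rw [mkRow_eq_cons n j cnt hjn]
  obtain ⟨m, hm⟩ : ∃ m, cnt j = m + 1 := ⟨cnt j - 1, by omega⟩
  rw [hm, List.replicate_succ]
  rfl

lemma length_mkRow_ge (n j : ℕ) (cnt : ℕ → ℕ) (hjn : j ≤ n) :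
    cnt j ≤ (mkRow n j cnt).length := by
  have h := List.count_le_length (a := j) (l := mkRow n j cnt)
  rw [count_mkRow n j j cnt hjn, if_pos (by omega : j ≤ j ∧ j ≤ 2*n+1-j)] at h
  exact h

lemma chain'_leD_of_sorted {n : ℕ} {L : List ℕ} (hs : L.Pairwise (· ≤ ·))
    (h : ¬(n ∈ L ∧ (n+1) ∈ L)) : L.Chain' (leD n) := by
  rw [List.Chain', List.isChain_iff_getElem]
  intro i hi
  have h1 : L.get ⟨i, by omega⟩ ≤ L.get ⟨i+1, by omega⟩ :=
    hs.rel_get_of_lt (by simp)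
  rcases eq_or_lt_of_le h1 with he | hlt
  · exact Or.inl he
  · refine Or.inr ⟨hlt, ?_⟩
    rintro ⟨ha, hb⟩
    exact h ⟨ha ▸ L.get_mem _, hb ▸ L.get_mem _⟩

lemma sorted_of_chain'_leD {n : ℕ} {L : List ℕ} (hc : L.Chain' (leD n)) :
    L.Pairwise (· ≤ ·) := by
  rw [← List.isChain_iff_pairwise]
  refine List.IsChain.imp (fun a b hab => ?_) hc
  rcases hab with hab | hab
  exacts [le_of_eq hab, le_of_lt hab.1]

lemma mem_ge_of_head {L : List ℕ} {a : ℕ} (hs : L.Pairwise (· ≤ ·)) (hh : L.head? = some a) :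
    ∀ x ∈ L, a ≤ x := by
  cases L with
  | nil => simp at hh
  | cons b L =>
    simp only [List.head?_cons, Option.some_inj] at hh
    subst hh
    intro x hx
    rcases List.mem_cons.1 hx with rfl | hx
    · exact le_rfl
    · exact List.rel_of_pairwise_cons hs hx

end AuxList
section AuxInv

variable {n j r : ℕ} {c : (ℕ → ℤ) → ℕ}

lemma cntF_self (aj : ℕ) : cntF n j c aj j = aj := by rw [cntF, if_pos rfl]

lemma cntF_unbarred (aj : ℕ) {x : ℕ} (hx1 : j < x) (hx2 : x ≤ n) :
    cntF n j c aj x = c (betaD j (x-1)) - MjF j c (x-1) + MjF0 n j c x := by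
  rw [cntF, if_neg (by omega), if_pos hx2]

lemma cntF_barred (aj : ℕ) (hj : 1 ≤ j) {x : ℕ} (hx1 : n < x) (hx2 : x < 2*n+1-j) :
    cntF n j c aj x = c (gammaD j (2*n+1-x)) - MjF j c (2*n-x) + MjF0 n j c (2*n+1-x) := by
  rw [cntF, if_neg (by omega), if_neg (by omega), if_neg (by omega)]

lemma cntF_top (aj : ℕ) (hj : 1 ≤ j) (hjn : j ≤ n-1) (hn : 4 ≤ n) :
    cntF n j c aj (2*n+1-j) = MjF j c j := by
  rw [cntF, if_neg (by omega), if_neg (by omega), if_pos rfl]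

lemma min_cntF (aj : ℕ) (hn : 4 ≤ n) (hj : 1 ≤ j) (hjn : j ≤ n-1) {k : ℕ}
    (hk1 : j < k) (hk2 : k ≤ n) :
    min (cntF n j c aj k) (cntF n j c aj (2*n+1-k)) = MjF0 n j c k := by
  rw [cntF_unbarred aj hk1 hk2, cntF_barred aj hj (by omega) (by omega),
    show 2*n+1-(2*n+1-k) = k by omega, show 2*n-(2*n+1-k) = k-1 by omega]
  have hm : MjF j c (k-1) = min (c (betaD j (k-1))) (c (gammaD j k)) := by
    rw [MjF, show k-1+1 = k by omega]
  rw [hm]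
  omega

lemma cntF_n_zero (aj : ℕ) (hn : 4 ≤ n) (hj : 1 ≤ j) (hjn : j ≤ n-1) :
    cntF n j c aj n = 0 ∨ cntF n j c aj (n+1) = 0 := by
  rw [cntF_unbarred aj (by omega) le_rfl, cntF_barred aj hj (by omega) (by omega),
    show 2*n+1-(n+1) = n by omega, show 2*n-(n+1) = n-1 by omega]
  have h0 : MjF0 n j c n = 0 := by rw [MjF0, if_neg (by omega)]
  have hm : MjF j c (n-1) = min (c (betaD j (n-1))) (c (gammaD j n)) := by
    rw [MjF, show n-1+1 = n by omega]
  omega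

lemma mkRow_contrib_beta (aj : ℕ) (hn : 4 ≤ n) (hj : 1 ≤ j) (hjn : j ≤ n-1) {k : ℕ}
    (hk1 : j ≤ k) (hk2 : k ≤ n-1) :
    rowContribD n j (mkRow n j (cntF n j c aj)) (betaD j k) = c (betaD j k) := by
  rw [rowContrib_beta_eval hn hj hk1 hk2]
  set R := mkRow n j (cntF n j c aj) with hR
  have hcm : ∀ x : ℕ, R.count x = if j ≤ x ∧ x ≤ 2*n+1-j then cntF n j c aj x else 0 :=
    fun x => count_mkRow n j x _ (by omega)
  have hA1 : R.count (2*n+1-j) = MjF j c j := by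
    rw [hcm, if_pos (by omega), cntF_top aj hj hjn hn]
  have hmin : ∀ m, j < m → m ≤ n → min (R.count m) (R.count (2*n+1-m)) = MjF0 n j c m := by
    intro m h1 h2
    rw [hcm, hcm, if_pos (by omega), if_pos (by omega)]
    exact min_cntF aj hn hj hjn h1 h2
  have hcount : R.count (k+1) = c (betaD j k) - MjF j c k + MjF0 n j c (k+1) := by
    rw [hcm, if_pos (by omega), cntF_unbarred aj (by omega) (by omega),
      show k+1-1 = k by omega]
  have e2 : MjF j c k ≤ c (betaD j k) := by rw [MjF]; exact min_le_left _ _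
  by_cases hkj : k = j
  · rw [if_pos hkj, hA1]
    have hjj : MjF j c j = MjF j c k := by rw [hkj]
    by_cases h2 : k+1 ≤ n-1
    · rw [if_pos h2, hmin (k+1) (by omega) (by omega), hcount]
      have e1 : MjF0 n j c (k+1) = MjF j c (k+1) := by rw [MjF0, if_pos h2]
      omega
    · rw [if_neg h2, hcount]
      have e1 : MjF0 n j c (k+1) = 0 := by rw [MjF0, if_neg h2]
      omega
  · rw [if_neg hkj, hmin k (by omega) (by omega)]
    have e1 : MjF0 n j c k = MjF j c k := by rw [MjF0, if_pos hk2]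
    by_cases h2 : k+1 ≤ n-1
    · rw [if_pos h2, hmin (k+1) (by omega) (by omega), hcount]
      have e3 : MjF0 n j c (k+1) = MjF j c (k+1) := by rw [MjF0, if_pos h2]
      omega
    · rw [if_neg h2, hcount]
      have e3 : MjF0 n j c (k+1) = 0 := by rw [MjF0, if_neg h2]
      omega

lemma mkRow_contrib_gamma (aj : ℕ) (hn : 4 ≤ n) (hj : 1 ≤ j) (hjn : j ≤ n-1) {k : ℕ}
    (hk1 : j < k) (hk2 : k ≤ n) :
    rowContribD n j (mkRow n j (cntF n j c aj)) (gammaD j k) = c (gammaD j k) := by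
  rw [rowContrib_gamma_eval hn hj hk1 hk2]
  set R := mkRow n j (cntF n j c aj) with hR
  have hcm : ∀ x : ℕ, R.count x = if j ≤ x ∧ x ≤ 2*n+1-j then cntF n j c aj x else 0 :=
    fun x => count_mkRow n j x _ (by omega)
  have hA1 : R.count (2*n+1-j) = MjF j c j := by
    rw [hcm, if_pos (by omega), cntF_top aj hj hjn hn]
  have hmin : ∀ m, j < m → m ≤ n → min (R.count m) (R.count (2*n+1-m)) = MjF0 n j c m := by
    intro m h1 h2
    rw [hcm, hcm, if_pos (by omega), if_pos (by omega)]
    exact min_cntF aj hn hj hjn h1 h2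
  have hcount : R.count (2*n+1-k) = c (gammaD j k) - MjF j c (k-1) + MjF0 n j c k := by
    rw [hcm, if_pos (by omega), cntF_barred aj hj (by omega) (by omega),
      show 2*n+1-(2*n+1-k) = k by omega, show 2*n-(2*n+1-k) = k-1 by omega]
  have hm : MjF j c (k-1) = min (c (betaD j (k-1))) (c (gammaD j k)) := by
    rw [MjF, show k-1+1 = k by omega]
  have e2 : MjF j c (k-1) ≤ c (gammaD j k) := by rw [hm]; exact min_le_right _ _
  by_cases hkj : k = j+1
  · rw [if_pos hkj, hA1]
    have hjj : MjF j c j = MjF j c (k-1) := by rw [show k-1 = j by omega]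
    by_cases h2 : k ≤ n-1
    · rw [if_pos h2, hmin k (by omega) (by omega), hcount]
      have e1 : MjF0 n j c k = MjF j c k := by rw [MjF0, if_pos h2]
      omega
    · rw [if_neg h2, hcount]
      have e1 : MjF0 n j c k = 0 := by rw [MjF0, if_neg h2]
      omega
  · rw [if_neg hkj, hmin (k-1) (by omega) (by omega)]
    have e1 : MjF0 n j c (k-1) = MjF j c (k-1) := by rw [MjF0, if_pos (by omega)]
    by_cases h2 : k ≤ n-1
    · rw [if_pos h2, hmin k (by omega) (by omega), hcount]
      have e3 : MjF0 n j c k = MjF j c k := by rw [MjF0, if_pos h2]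
      omega
    · rw [if_neg h2, hcount]
      have e3 : MjF0 n j c k = 0 := by rw [MjF0, if_neg h2]
      omega

lemma PhiD_length : (PhiD n c).length = n-1 := by rw [PhiD]; simp

lemma PhiD_getD (hr : r < n-1) :
    (PhiD n c).getD r [] = mkRow n (r+1) (cntF n (r+1) c (rowLenAux n c (n-r-2) + 1)) := by
  rw [PhiD, List.getD_eq_getElem _ _ (by simpa using hr)]
  simp

lemma PhiD_getD_ge (hr : n-1 ≤ r) : (PhiD n c).getD r [] = [] :=
  List.getD_eq_default _ _ (by rw [PhiD_length]; omega)

lemma PhiD_row_len (hn : 4 ≤ n) (hr : r < n-1) :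
    ((PhiD n c).getD (r+1) []).length = rowLenAux n c (n-r-2) := by
  by_cases h : r+1 < n-1
  · rw [PhiD_getD h, show n-r-2 = (n-r-3)+1 by omega, rowLenAux,
      show n-(n-r-3)-1 = r+2 by omega, show n-(r+1)-2 = n-r-3 by omega]
  · rw [PhiD_getD_ge (by omega), show n-r-2 = 0 by omega, rowLenAux]
    rfl

end AuxInv
section AuxM2

variable {n : ℕ} {c : (ℕ → ℤ) → ℕ}

lemma PhiD_isML (hn : 4 ≤ n) (c : (ℕ → ℤ) → ℕ) : isMLTabD n (PhiD n c) := by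
  have hnotboth : ∀ r, r < n-1 →
      ¬(n ∈ (PhiD n c).getD r [] ∧ (n+1) ∈ (PhiD n c).getD r []) := by
    rintro r hr ⟨hm1, hm2⟩
    rw [PhiD_getD hr] at hm1 hm2
    rw [← List.count_pos_iff] at hm1 hm2
    rw [count_mkRow n (r+1) n _ (by omega), if_pos (by omega)] at hm1
    rw [count_mkRow n (r+1) (n+1) _ (by omega), if_pos (by omega)] at hm2
    rcases cntF_n_zero (n := n) (j := r+1) (c := c) (rowLenAux n c (n-r-2) + 1) hn (by omega) (by omega) with h | h <;> omega
  refine ⟨PhiD_length, ?_, ?_, ?_, ?_, ?_, ?_, ?_, ?_⟩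
  · -- entries in [1, 2n]
    intro r hr x hx
    rw [PhiD_getD hr] at hx
    have := mem_mkRow_bounds _ (by omega) hx
    omega
  · -- lengths weakly decreasing
    intro r hr
    rw [PhiD_row_len hn (by omega), PhiD_getD (by omega)]
    have hg := length_mkRow_ge n (r+1) (cntF n (r+1) c (rowLenAux n c (n-r-2) + 1)) (by omega)
    rw [cntF_self] at hg
    omega
  · -- rows weakly increasing
    intro r hr
    rw [PhiD_getD hr]
    apply chain'_leD_of_sorted (sorted_mkRow n (r+1) _)
    rw [← PhiD_getD hr]
    exact hnotboth r hr
  · -- not both n and n+1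
    exact hnotboth
  · -- columns
    intro r hr cidx hc
    have hlen1 : ((PhiD n c).getD (r+1) []).length = rowLenAux n c (n-r-2) :=
      PhiD_row_len hn (by omega)
    have hleft : ((PhiD n c).getD r []).getD cidx 0 = r+1 := by
      rw [PhiD_getD (by omega)]
      apply getD_mkRow_of_lt _ (by omega)
      rw [cntF_self]
      omega
    have hright : r+2 ≤ ((PhiD n c).getD (r+1) []).getD cidx 0 := by
      have hrow := PhiD_getD (n := n) (c := c) (r := r+1) hr
      have hx : ((PhiD n c).getD (r+1) []).getD cidx 0 ∈ (PhiD n c).getD (r+1) [] := by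
        rw [List.getD_eq_getElem _ _ hc]
        exact List.getElem_mem _
      rw [hrow] at hx
      have hb := (mem_mkRow_bounds _ (by omega) hx).1
      rw [← hrow] at hb
      omega
    left
    rw [hleft]
    exact ⟨by omega, by omega⟩
  · -- entries bounded by the largest letter
    intro r hr x hx
    rw [PhiD_getD hr] at hx
    have hb := mem_mkRow_bounds _ (by omega : r+1 ≤ n) hx
    by_cases he : x = 2*n - r
    · exact Or.inl he
    · exact Or.inr ⟨by omega, by omega⟩
  · -- head
    intro r hr
    rw [PhiD_getD hr]
    apply head?_mkRow _ (by omega)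
    rw [cntF_self]
    omega
  · -- counts
    intro r hr
    rw [PhiD_getD hr, count_mkRow n (r+1) (r+1) _ (by omega), if_pos (by omega),
      cntF_self, PhiD_row_len hn hr]

end AuxM2

section AuxR

lemma PsiD_PhiD {n : ℕ} (hn : 4 ≤ n) (c : (ℕ → ℤ) → ℕ) (hc : isKPD n c) :
    PsiD n (PhiD n c) = c := by
  funext β
  by_cases hβ : PosRootD n β
  · rcases hβ with ⟨i, k, hi, hik, hk, rfl⟩ | ⟨i, k, hi, hik, hk, rfl⟩
    · have hrow : (PhiD n c).getD (i-1) [] =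
          mkRow n i (cntF n i c (rowLenAux n c (n-(i-1)-2) + 1)) := by
        rw [PhiD_getD (show i-1 < n-1 by omega), show i-1+1 = i by omega]
      rw [PsiD_beta hn hi hik hk, hrow, mkRow_contrib_beta _ hn hi (by omega) hik hk]
    · have hrow : (PhiD n c).getD (i-1) [] =
          mkRow n i (cntF n i c (rowLenAux n c (n-(i-1)-2) + 1)) := by
        rw [PhiD_getD (show i-1 < n-1 by omega), show i-1+1 = i by omega]
      rw [PsiD_gamma hn hi hik hk, hrow, mkRow_contrib_gamma _ hn hi (by omega) hik hk]
  · exact (PsiD_isKPD n hn _ β hβ).trans (hc β hβ).symm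

end AuxR
section AuxL

variable {n : ℕ}

lemma row_step (hn : 4 ≤ n) (T : TabD) (hML : isMLTabD n T) {j : ℕ} (hj1 : 1 ≤ j) (hjn : j ≤ n-1) :
    mkRow n j (cntF n j (PsiD n T) ((T.getD (j-1) []).count j)) = T.getD (j-1) [] := by
  obtain ⟨h1, h2, h3, h4, h5, h6, h7, h8, h9⟩ := hML
  set c := PsiD n T with hcdef
  set R := T.getD (j-1) [] with hRdef
  have hsort : R.Pairwise (· ≤ ·) := sorted_of_chain'_leD (h4 (j-1) (by omega))
  have hhead : R.head? = some j := by
    have hh := h8 (j-1) (by omega)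
    rwa [show j-1+1 = j by omega] at hh
  have hlb : ∀ x ∈ R, j ≤ x := mem_ge_of_head hsort hhead
  have hub : ∀ x ∈ R, x ≤ 2*n+1-j := by
    intro x hx
    rcases h7 (j-1) (by omega) x hx with he | hlt
    · omega
    · have := hlt.1; omega
  have hA : R.count n = 0 ∨ R.count (n+1) = 0 := by
    rcases Classical.em (n ∈ R) with hm | hm
    · right
      rw [List.count_eq_zero]
      intro hm2
      exact h5 (j-1) (by omega) ⟨hm, hm2⟩
    · left; rw [List.count_eq_zero]; exact hm
  have hcβ : ∀ k, j ≤ k → k ≤ n-1 → c (betaD j k) = rowContribD n j R (betaD j k) := by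
    intro k hk1 hk2
    rw [hcdef, PsiD_beta hn hj1 hk1 hk2]
  have hcγ : ∀ k, j < k → k ≤ n → c (gammaD j k) = rowContribD n j R (gammaD j k) := by
    intro k hk1 hk2
    rw [hcdef, PsiD_gamma hn hj1 hk1 hk2]
  have hmj : ∀ k, j ≤ k → k ≤ n-1 → MjF j c k =
      (if k = j then R.count (2*n+1-j) else min (R.count k) (R.count (2*n+1-k))) := by
    intro k hk1 hk2
    rw [MjF, hcβ k hk1 hk2, hcγ (k+1) (by omega) (by omega),
      rowContrib_beta_eval hn hj1 hk1 hk2, rowContrib_gamma_eval hn hj1 (by omega) (by omega),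
      show k+1-1 = k by omega]
    simp only [show ((k+1 = j+1)) ↔ ((k = j)) from by omega]
    by_cases hk3 : k+1 ≤ n-1
    · rw [if_pos hk3]
      split_ifs <;> omega
    · rw [if_neg hk3, show k+1 = n by omega, show 2*n+1-n = n+1 by omega]
      split_ifs <;> omega
  apply List.Perm.eq_of_pairwise' (sorted_mkRow n j _) hsort
  rw [List.perm_iff_count]
  intro x
  rw [count_mkRow n j x _ (by omega)]
  by_cases hin : j ≤ x ∧ x ≤ 2*n+1-j
  · rw [if_pos hin]
    by_cases hxj : x = j
    · rw [hxj, cntF_self]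
    · by_cases hxn : x ≤ n
      · -- unbarred letters
        rw [cntF_unbarred _ (by omega) hxn, hcβ (x-1) (by omega) (by omega),
          rowContrib_beta_eval hn hj1 (by omega) (by omega), show x-1+1 = x by omega,
          hmj (x-1) (by omega) (by omega), MjF0]
        by_cases hx3 : x ≤ n-1
        · rw [if_pos hx3, if_pos hx3, hmj x (by omega) hx3, if_neg hxj]
          split_ifs <;> omega
        · rw [if_neg hx3, if_neg hx3]
          split_ifs <;> omega
      · by_cases hxt : x = 2*n+1-j
        · rw [hxt, cntF_top _ hj1 hjn hn, hmj j le_rfl (by omega), if_pos rfl]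
        · -- barred letters
          rw [cntF_barred _ hj1 (by omega) (by omega), hcγ (2*n+1-x) (by omega) (by omega),
            rowContrib_gamma_eval hn hj1 (by omega) (by omega),
            show 2*n+1-x-1 = 2*n-x by omega, show 2*n+1-(2*n-x) = x+1 by omega,
            show 2*n+1-(2*n+1-x) = x by omega,
            hmj (2*n-x) (by omega) (by omega), show 2*n+1-(2*n-x) = x+1 by omega, MjF0]
          by_cases hx3 : 2*n+1-x ≤ n-1
          · rw [if_pos hx3, if_pos hx3, hmj (2*n+1-x) (by omega) hx3,
              if_neg (show ¬ 2*n+1-x = j by omega), show 2*n+1-(2*n+1-x) = x by omega]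
            split_ifs <;> omega
          · rw [if_neg hx3, if_neg hx3]
            split_ifs <;> omega
  · rw [if_neg hin]
    symm
    rw [List.count_eq_zero]
    intro hmem
    have hl := hlb x hmem
    have hu := hub x hmem
    omega

lemma PhiD_PsiD (hn : 4 ≤ n) (T : TabD) (hML : isMLTabD n T) : PhiD n (PsiD n T) = T := by
  have h1 := hML.1
  have h9 := hML.2.2.2.2.2.2.2.2
  set c := PsiD n T with hcdef
  have main : ∀ t, t ≤ n-1 → rowLenAux n c t = (T.getD (n-t-1) []).length := by
    intro t
    induction t with
    | zero =>
      intro _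
      rw [rowLenAux, List.getD_eq_default _ _ (by omega), List.length_nil]
    | succ t ih =>
      intro htn
      have ihlen := ih (by omega)
      have haj : rowLenAux n c t + 1 = (T.getD (n-t-1-1) []).count (n-t-1) := by
        have h9' := h9 (n-t-1-1) (by omega)
        rw [show n-t-1-1+1 = n-t-1 by omega] at h9'
        rw [h9', ihlen]
      rw [rowLenAux, haj, row_step hn T ⟨h1, hML.2.1, hML.2.2.1, hML.2.2.2.1, hML.2.2.2.2.1,
        hML.2.2.2.2.2.1, hML.2.2.2.2.2.2.1, hML.2.2.2.2.2.2.2.1, h9⟩ (by omega) (by omega),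
        show n-t-1-1 = n-(t+1)-1 by omega]
  apply List.ext_getElem (by rw [PhiD_length, h1])
  intro i hi1 hi2
  have hi : i < n-1 := by rw [PhiD_length] at hi1; exact hi1
  have hlen2 : rowLenAux n c (n-i-2) = (T.getD (i+1) []).length := by
    rw [main (n-i-2) (by omega), show n-(n-i-2)-1 = i+1 by omega]
  have haj : rowLenAux n c (n-i-2) + 1 = (T.getD i []).count (i+1) := by
    rw [hlen2, h9 i hi]
  have hrow : (PhiD n c).getD i [] = T.getD i [] := by
    rw [PhiD_getD hi, haj]
    have hs := row_step hn T ⟨h1, hML.2.1, hML.2.2.1, hML.2.2.2.1, hML.2.2.2.2.1,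
      hML.2.2.2.2.2.1, hML.2.2.2.2.2.2.1, hML.2.2.2.2.2.2.2.1, h9⟩ (j := i+1) (by omega) (by omega)
    rwa [show i+1-1 = i by omega] at hs
  rw [← List.getD_eq_getElem (PhiD n c) [] hi1, ← List.getD_eq_getElem T [] hi2, hrow]

end AuxL

/-- `Ψ` is a bijection from the set `𝒯(∞)` of marginally large tableaux of
type `D_n` onto the set of Kostant partitions of type `D_n`. -/
theorem statement18 (n : ℕ) (hn : 4 ≤ n) :
    Set.BijOn (PsiD n) {T | isMLTabD n T} {c | isKPD n c} := by
  apply Set.InvOn.bijOn (f' := PhiD n)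
  · exact ⟨fun T hT => PhiD_PsiD hn T hT, fun c hc => PsiD_PhiD hn c hc⟩
  · exact fun T _ => PsiD_isKPD n hn T
  · exact fun c _ => PhiD_isML hn c

end
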